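/- Let u*(t) = a·t + b be an affine control whose trajectory from the initial state (p0, v0) satisfies p*(tf) = pf and v*(tf) = vf. Then for every continuous control u : [t0, tf] → ℝ whose trajectory from (p0, v0) also satisfies p(tf) = pf and v(tf) = vf, the energy cost satisfies ∫_{t0}^{tf} u(t)² dt ≥ ∫_{t0}^{tf} u*(t)² dt, with equality if and only if u = u* on [t0, tf]. (The affine control u*(t) = a_i·t + b_i from the Euler–Lagrange analysis is the unique energy-optimal control for fixed terminal position and speed.) -/

import Mathlib

open intervalIntegral

open MeasureTheory Set in
private lemma key_parts {t0 tf : ℝ} (w : ℝ → ℝ) (hw : Continuous w)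
    (h0 : (∫ σ in t0..tf, w σ) = 0)
    (h2 : (∫ t in t0..tf, (∫ σ in t0..t, w σ)) = 0) :
    (∫ t in t0..tf, t * w t) = 0 := by
  have hF : ∀ x ∈ Set.uIcc t0 tf, HasDerivAt (fun t => ∫ σ in t0..t, w σ) (w x) x :=
    fun x _ => (hw.integral_hasStrictDerivAt t0 x).hasDerivAt
  have hid : ∀ x ∈ Set.uIcc t0 tf, HasDerivAt (fun t : ℝ => t) 1 x :=
    fun x _ => hasDerivAt_id x
  have H := integral_mul_deriv_eq_deriv_mul hid hF
    (intervalIntegrable_const) (hw.intervalIntegrable t0 tf)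
  simpa [h0, h2, intervalIntegral.integral_same] using H

/-- The affine control u*(t) = a·t + b matching given terminal position and
speed is energy-optimal among all continuous controls matching the same
boundary conditions, and is the unique such minimizer. -/
theorem affine_control_energy_optimal
    (t0 tf p0 v0 pf vf a b : ℝ) (h : t0 < tf)
    (hvStar : v0 + (∫ σ in t0..tf, (a * σ + b)) = vf)
    (hpStar : p0 + (∫ t in t0..tf, (v0 + ∫ σ in t0..t, (a * σ + b))) = pf) :
    ∀ u : ℝ → ℝ, ContinuousOn u (Set.Icc t0 tf) →
      v0 + (∫ σ in t0..tf, u σ) = vf →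
      p0 + (∫ t in t0..tf, (v0 + ∫ σ in t0..t, u σ)) = pf →
      (∫ t in t0..tf, (a * t + b) ^ 2) ≤ (∫ t in t0..tf, (u t) ^ 2) ∧
      ((∫ t in t0..tf, (u t) ^ 2) = (∫ t in t0..tf, (a * t + b) ^ 2) ↔
        ∀ t ∈ Set.Icc t0 tf, u t = a * t + b) := by
  intro u hu hv hp
  have hle : t0 ≤ tf := h.le
  have huIcc : Set.uIcc t0 tf = Set.Icc t0 tf := Set.uIcc_of_le hle
  -- continuous extension of u
  set U : ℝ → ℝ := Set.IccExtend hle ((Set.Icc t0 tf).restrict u) with hUdef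
  have hUcont : Continuous U := hu.restrict.Icc_extend'
  have hUeq : ∀ t ∈ Set.Icc t0 tf, U t = u t := by
    intro t ht
    simp [hUdef, Set.IccExtend_of_mem hle _ ht]
    rfl
  set s : ℝ → ℝ := fun t => a * t + b with hsdef
  have hscont : Continuous s := by continuity
  set w : ℝ → ℝ := fun t => U t - s t with hwdef
  have hwcont : Continuous w := hUcont.sub hscont
  -- inner integral congruence
  have hinner : ∀ t ∈ Set.Icc t0 tf, (∫ σ in t0..t, U σ) = ∫ σ in t0..t, u σ := by
    intro t ht
    refine intervalIntegral.integral_congr fun x hx => ?_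
    apply hUeq
    rw [Set.uIcc_of_le ht.1] at hx
    exact ⟨hx.1, hx.2.trans ht.2⟩
  have hUu : (∫ σ in t0..tf, U σ) = ∫ σ in t0..tf, u σ :=
    hinner tf ⟨hle, le_refl _⟩
  -- ∫ w = 0
  have hw0 : (∫ σ in t0..tf, w σ) = 0 := by
    rw [hwdef]
    rw [intervalIntegral.integral_sub (hUcont.intervalIntegrable _ _)
      (hscont.intervalIntegrable _ _), hUu]
    have h1 : (∫ σ in t0..tf, u σ) = vf - v0 := by linarith
    have h2 : (∫ σ in t0..tf, s σ) = vf - v0 := by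
      simp only [hsdef]; linarith
    rw [h1, h2]; ring
  -- ∫ ∫ w = 0
  have hS : ∀ x : ℝ, ContinuousAt (fun t => ∫ σ in t0..t, s σ) x :=
    fun x => HasDerivAt.continuousAt (hscont.integral_hasStrictDerivAt t0 x).hasDerivAt
  have hScont : Continuous (fun t => ∫ σ in t0..t, s σ) :=
    continuous_iff_continuousAt.mpr hS
  have hGcont : Continuous (fun t => ∫ σ in t0..t, U σ) :=
    continuous_iff_continuousAt.mpr
      (fun x => HasDerivAt.continuousAt (hUcont.integral_hasStrictDerivAt t0 x).hasDerivAt)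
  have hw2 : (∫ t in t0..tf, (∫ σ in t0..t, w σ)) = 0 := by
    have hsplit : ∀ t : ℝ, (∫ σ in t0..t, w σ)
        = (∫ σ in t0..t, U σ) - (∫ σ in t0..t, s σ) := by
      intro t
      rw [hwdef]
      exact intervalIntegral.integral_sub (hUcont.intervalIntegrable _ _)
        (hscont.intervalIntegrable _ _)
    have hcongr : (∫ t in t0..tf, (∫ σ in t0..t, w σ))
        = (∫ t in t0..tf, (∫ σ in t0..t, U σ)) - ∫ t in t0..tf, (∫ σ in t0..t, s σ) := by
      rw [← intervalIntegral.integral_sub (hGcont.intervalIntegrable _ _)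
        (hScont.intervalIntegrable _ _)]
      exact intervalIntegral.integral_congr fun x _ => hsplit x
    rw [hcongr]
    have hGu : (∫ t in t0..tf, (∫ σ in t0..t, U σ))
        = ∫ t in t0..tf, (∫ σ in t0..t, u σ) := by
      refine intervalIntegral.integral_congr fun x hx => ?_
      rw [huIcc] at hx
      exact hinner x hx
    rw [hGu]
    -- from hp and hpStar
    have e1 : (∫ t in t0..tf, (v0 + ∫ σ in t0..t, u σ))
        = (∫ t in t0..tf, (v0 : ℝ)) + ∫ t in t0..tf, (∫ σ in t0..t, u σ) := by
      refine intervalIntegral.integral_add (intervalIntegrable_const) ?_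
      refine (hGcont.intervalIntegrable _ _).congr ?_
      -- integrable of (fun t => ∫ σ in t0..t, u σ)
      have : Set.EqOn (fun t => ∫ σ in t0..t, U σ) (fun t => ∫ σ in t0..t, u σ)
          (Set.uIcc t0 tf) := by
        intro x hx; rw [huIcc] at hx; exact hinner x hx
      exact (fun x hx => this (Set.uIoc_subset_uIcc hx))
    have e2 : (∫ t in t0..tf, (v0 + ∫ σ in t0..t, s σ))
        = (∫ t in t0..tf, (v0 : ℝ)) + ∫ t in t0..tf, (∫ σ in t0..t, s σ) :=
      intervalIntegral.integral_add (intervalIntegrable_const)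
        (hScont.intervalIntegrable _ _)
    have hp' : (∫ t in t0..tf, (v0 + ∫ σ in t0..t, u σ)) = pf - p0 := by linarith
    have hps' : (∫ t in t0..tf, (v0 + ∫ σ in t0..t, s σ)) = pf - p0 := by
      simp only [hsdef]; linarith
    rw [hp'] at e1; rw [hps'] at e2; linarith
  have hw1 : (∫ t in t0..tf, t * w t) = 0 := key_parts w hwcont hw0 hw2
  -- ∫ s * w = 0
  have hsw : (∫ t in t0..tf, s t * w t) = 0 := by
    have : (fun t => s t * w t) = fun t => a * (t * w t) + b * w t := by
      funext t; simp only [hsdef]; ring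
    rw [this, intervalIntegral.integral_add (f := fun t => a * (t * w t)) (g := fun t => b * w t)
      ((continuous_const.mul (continuous_id'.mul hwcont)).intervalIntegrable _ _)
      ((continuous_const.mul hwcont).intervalIntegrable _ _),
      intervalIntegral.integral_const_mul, intervalIntegral.integral_const_mul, hw1, hw0]
    ring
  -- energy decomposition
  have hu2 : (∫ t in t0..tf, (u t) ^ 2) = ∫ t in t0..tf, (U t) ^ 2 := by
    refine intervalIntegral.integral_congr fun x hx => ?_
    rw [huIcc] at hx; rw [hUeq x hx]
  have hdecomp : (∫ t in t0..tf, (U t) ^ 2)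
      = (∫ t in t0..tf, s t ^ 2) + ∫ t in t0..tf, w t ^ 2 := by
    have hexp : (fun t => (U t) ^ 2)
        = fun t => s t ^ 2 + (2 * (s t * w t) + w t ^ 2) := by
      funext t
      have : U t = s t + w t := by simp [hwdef]
      rw [this]; ring
    rw [hexp, intervalIntegral.integral_add (f := fun t => s t ^ 2) (g := fun t => 2 * (s t * w t) + w t ^ 2) ((hscont.pow 2).intervalIntegrable _ _)
        (((continuous_const.mul (hscont.mul hwcont)).add (hwcont.pow 2)).intervalIntegrable _ _),
      intervalIntegral.integral_add (f := fun t => 2 * (s t * w t)) (g := fun t => w t ^ 2) ((continuous_const.mul (hscont.mul hwcont)).intervalIntegrable _ _)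
        ((hwcont.pow 2).intervalIntegrable _ _),
      intervalIntegral.integral_const_mul, hsw]
    ring
  have hw2nonneg : 0 ≤ ∫ t in t0..tf, w t ^ 2 :=
    intervalIntegral.integral_nonneg hle (fun x _ => sq_nonneg _)
  constructor
  · rw [hu2, hdecomp]; simp only [hsdef]; linarith
  constructor
  · intro heq
    have hzero : (∫ t in t0..tf, w t ^ 2) = 0 := by
      rw [hu2, hdecomp] at heq
      simp only [hsdef] at heq ⊢
      linarith
    have hae : (fun t => w t ^ 2) =ᵐ[MeasureTheory.volume.restrict (Set.Ioc t0 tf)] 0 :=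
      (intervalIntegral.integral_eq_zero_iff_of_le_of_nonneg_ae hle
        (Filter.Eventually.of_forall fun x => sq_nonneg _)
        ((hwcont.pow 2).intervalIntegrable _ _)).mp hzero
    have hIoc : Set.EqOn (fun t => w t ^ 2) 0 (Set.Ioc t0 tf) :=
      MeasureTheory.Measure.eqOn_Ioc_of_ae_eq MeasureTheory.volume hae
        (hwcont.pow 2).continuousOn continuousOn_const
    have hwIoc : Set.EqOn w 0 (Set.Ioc t0 tf) := by
      intro x hx
      have := hIoc hx
      simpa [pow_eq_zero_iff] using this
    have hwIcc : Set.EqOn w 0 (Set.Icc t0 tf) := by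
      have := hwIoc.closure hwcont continuous_const
      rwa [closure_Ioc h.ne] at this
    intro t ht
    have h1 : w t = 0 := hwIcc ht
    have h2 : U t = u t := hUeq t ht
    simp only [hwdef, hsdef] at h1
    linarith [h1, h2.symm ▸ h1]
  · intro heqfun
    have hwzero : Set.EqOn w 0 (Set.Icc t0 tf) := by
      intro x hx
      have := heqfun x hx
      simp only [hwdef, hsdef, hUeq x hx, this, Pi.zero_apply]
      ring
    have : (∫ t in t0..tf, w t ^ 2) = 0 := by
      rw [intervalIntegral.integral_congr (g := fun _ => (0:ℝ))
        (fun x hx => by rw [huIcc] at hx; simp [hwzero hx])]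
      simp
    rw [hu2, hdecomp, this]
    simp only [hsdef]
    ring
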